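/- Let E be a reflexive real Banach space and S : E ⇉ E* maximally monotone. Then G(S) is quasidense in E × E*: for all (x,x*) ∈ E × E*, inf_{(s,s*)∈G(S)}[½‖s−x‖² + ½‖s*−x*‖² + ⟨s−x,s*−x*⟩] ≤ 0. -/

import Mathlib

open NormedSpace Metric

set_option synthInstance.maxHeartbeats 1000000
set_option maxHeartbeats 2000000

noncomputable section QuasidenseAux

variable {E : Type*} [NormedAddCommGroup E] [NormedSpace ℝ E]

noncomputable def qq (b : E × StrongDual ℝ E) : ℝ := b.2 b.1
noncomputable def QQ (b : E × StrongDual ℝ E) : ℝ := ‖b.1‖^2/2 + ‖b.2‖^2/2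
noncomputable def aff (a b : E × StrongDual ℝ E) : ℝ := a.2 b.1 + b.2 a.1 - a.2 a.1

def toWE (x : E) : WeakSpace ℝ E := x
def toWD (x : StrongDual ℝ E) : WeakSpace ℝ (StrongDual ℝ E) := x
def fromP (p : (WeakSpace ℝ E × WeakSpace ℝ (StrongDual ℝ E)) × ℝ) : (E × StrongDual ℝ E) × ℝ := p

lemma norm_combo_sq {s t : ℝ} (hs : 0 ≤ s) (ht : 0 ≤ t) (hst : s + t = 1) (u v : E) :
    ‖s • u + t • v‖^2 ≤ s * ‖u‖^2 + t * ‖v‖^2 := by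
  have h1 : ‖s • u + t • v‖ ≤ s * ‖u‖ + t * ‖v‖ := by
    calc ‖s • u + t • v‖ ≤ ‖s • u‖ + ‖t • v‖ := norm_add_le _ _
      _ = s * ‖u‖ + t * ‖v‖ := by rw [norm_smul, norm_smul, Real.norm_eq_abs, Real.norm_eq_abs,
          abs_of_nonneg hs, abs_of_nonneg ht]
  have h2 : ‖s • u + t • v‖^2 ≤ (s * ‖u‖ + t * ‖v‖)^2 :=
    pow_le_pow_left₀ (norm_nonneg _) h1 2
  nlinarith [sq_nonneg (‖u‖ - ‖v‖), mul_nonneg hs ht]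

lemma QQ_combo {s t : ℝ} (hs : 0 ≤ s) (ht : 0 ≤ t) (hst : s + t = 1) (u v : E × StrongDual ℝ E) :
    QQ (s • u + t • v) ≤ s * QQ u + t * QQ v := by
  have h1 := norm_combo_sq hs ht hst u.1 v.1
  have h2 := norm_combo_sq (E := StrongDual ℝ E) hs ht hst u.2 v.2
  simp only [QQ, Prod.fst_add, Prod.snd_add, Prod.smul_fst, Prod.smul_snd]
  linarith

lemma aff_combo (a : E × StrongDual ℝ E) {s t : ℝ} (hst : s + t = 1) (u v : E × StrongDual ℝ E) :
    aff a (s • u + t • v) = s * aff a u + t * aff a v := by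
  simp only [aff, Prod.fst_add, Prod.snd_add, Prod.smul_fst, Prod.smul_snd, map_add, map_smul,
    smul_eq_mul, ContinuousLinearMap.add_apply, ContinuousLinearMap.coe_smul', Pi.smul_apply]
  linear_combination (a.2 a.1) * hst


lemma dual_opt (ℓ : StrongDual ℝ E) {δ : ℝ} (hδ : 0 < δ) :
    ∃ z : E, ‖ℓ‖^2/2 - δ ≤ ℓ z - ‖z‖^2/2 := by
  rcases eq_or_lt_of_le (norm_nonneg ℓ) with h0 | hpos
  · exact ⟨0, by simp [← h0]; linarith⟩
  · have hη : 0 < δ / ‖ℓ‖ := div_pos hδ hpos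
    have hr : ‖ℓ‖ - δ/‖ℓ‖ < ‖ℓ‖ := by linarith
    obtain ⟨x, hx1, hx2⟩ := ContinuousLinearMap.exists_lt_apply_of_lt_opNorm ℓ hr
    rw [Real.norm_eq_abs] at hx2
    have h6 : ‖ℓ‖ * (δ/‖ℓ‖) = δ := by field_simp
    have hxx : ‖ℓ‖ * ‖x‖ ≤ ‖ℓ‖ := by nlinarith [norm_nonneg x]
    have hxx2 : (‖ℓ‖*‖x‖)^2 ≤ ‖ℓ‖^2 := by
      nlinarith [mul_nonneg hpos.le (norm_nonneg x)]
    rcases le_or_gt 0 (ℓ x) with hsgn | hsgn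
    · refine ⟨‖ℓ‖ • x, ?_⟩
      have h3 : ℓ (‖ℓ‖ • x) = ‖ℓ‖ * ℓ x := by rw [map_smul]; rfl
      have h4 : ‖‖ℓ‖ • x‖ = ‖ℓ‖ * ‖x‖ := by
        rw [norm_smul, Real.norm_eq_abs, abs_of_nonneg hpos.le]
      have h5 : ‖ℓ‖ - δ/‖ℓ‖ < ℓ x := by rwa [abs_of_nonneg hsgn] at hx2
      rw [h3, h4]
      nlinarith [mul_lt_mul_of_pos_left h5 hpos]
    · refine ⟨(-‖ℓ‖) • x, ?_⟩
      have h3 : ℓ ((-‖ℓ‖) • x) = ‖ℓ‖ * (-(ℓ x)) := by rw [map_smul]; show -‖ℓ‖ * ℓ x = _; ring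
      have h4 : ‖(-‖ℓ‖) • x‖ = ‖ℓ‖ * ‖x‖ := by
        rw [norm_smul, Real.norm_eq_abs, abs_neg, abs_of_nonneg hpos.le]
      have h5 : ‖ℓ‖ - δ/‖ℓ‖ < -(ℓ x) := by rwa [abs_of_neg hsgn] at hx2
      rw [h3, h4]
      nlinarith [mul_lt_mul_of_pos_left h5 hpos]

lemma vec_opt (w : E) : ∃ z : StrongDual ℝ E, z w + ‖z‖^2/2 ≤ -(‖w‖^2/2) := by
  rcases eq_or_ne w 0 with rfl | hw
  · exact ⟨0, by simp⟩
  · obtain ⟨g, hg1, hg2⟩ := exists_dual_vector ℝ w (norm_ne_zero_iff.mpr hw)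
    refine ⟨(-‖w‖) • g, ?_⟩
    have h3 : ((-‖w‖) • g) w = -‖w‖ * ‖w‖ := by
      rw [ContinuousLinearMap.smul_apply, hg2]; simp [smul_eq_mul]
    have h4 : ‖(-‖w‖) • g‖ = ‖w‖ := by
      rw [norm_smul (-‖w‖) g, hg1, Real.norm_eq_abs, abs_neg, abs_of_nonneg (norm_nonneg w), mul_one]
    rw [h3, h4]; ring_nf
    nlinarith [norm_nonneg w]

theorem cptE' (R : ℝ) (hrefl : Function.Surjective (NormedSpace.inclusionInDoubleDual ℝ E)) :
    IsCompact (toWE '' closedBall (0:E) R) := by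
  set ι := inclusionInDoubleDual ℝ E with hι
  have hinj : Function.Injective ι := (inclusionInDoubleDualLi ℝ (E := E)).injective
  have hnorm : ∀ x : E, ‖ι x‖ = ‖x‖ := fun x => (inclusionInDoubleDualLi ℝ (E := E)).norm_map x
  set e := Equiv.ofBijective ι ⟨hinj, hrefl⟩ with he
  have hψcont : Continuous (fun Φ : WeakDual ℝ (StrongDual ℝ E) => toWE (e.symm Φ)) := by
    apply WeakBilin.continuous_of_continuous_eval
    intro ℓ
    have h2 : (fun Φ : WeakDual ℝ (StrongDual ℝ E) => (topDualPairing ℝ E).flip (toWE (e.symm Φ)) ℓ)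
        = fun Φ : WeakDual ℝ (StrongDual ℝ E) => Φ ℓ := by
      funext Φ
      show ℓ (e.symm Φ) = Φ ℓ
      have h1 : ι (e.symm Φ) = Φ := e.apply_symm_apply Φ
      calc ℓ (e.symm Φ) = ι (e.symm Φ) ℓ := rfl
        _ = Φ ℓ := by rw [h1]; rfl
    exact h2 ▸ WeakDual.eval_continuous ℓ
  have hball : (toWE '' closedBall (0:E) R)
      = (fun Φ : WeakDual ℝ (StrongDual ℝ E) => toWE (e.symm Φ)) ''
        (WeakDual.toStrongDual ⁻¹' closedBall 0 R) := by
    ext x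
    simp only [Set.mem_image, Set.mem_preimage, mem_closedBall_zero_iff]
    constructor
    · rintro ⟨y, hy, rfl⟩
      refine ⟨ι y, ?_, ?_⟩
      · refine (mem_closedBall_zero_iff (E := StrongDual ℝ (StrongDual ℝ E))).mpr ?_
        rw [show WeakDual.toStrongDual (ι y) = ι y from rfl, hnorm]
        exact hy
      · rw [show ι y = e y from rfl, e.symm_apply_apply y]
    · rintro ⟨Φ, hΦ, rfl⟩
      refine ⟨e.symm Φ, ?_, rfl⟩
      have h1 : ι (e.symm Φ) = Φ := e.apply_symm_apply Φ
      have : ‖ι (e.symm Φ)‖ ≤ R := by rw [h1]; exact (mem_closedBall_zero_iff (E := StrongDual ℝ (StrongDual ℝ E))).mp hΦ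
      rwa [hnorm] at this
  rw [hball]
  exact (WeakDual.isCompact_closedBall (E := StrongDual ℝ E) (𝕜 := ℝ) 0 R).image hψcont


theorem cptD' (R : ℝ) (hrefl : Function.Surjective (NormedSpace.inclusionInDoubleDual ℝ E)) :
    IsCompact (toWD '' closedBall (0:StrongDual ℝ E) R) := by
  have hθcont : Continuous (fun x : WeakDual ℝ E => toWD (x : StrongDual ℝ E)) := by
    apply WeakBilin.continuous_of_continuous_eval
    intro Φ
    obtain ⟨w, hw⟩ := hrefl Φ
    have h2 : (fun x : WeakDual ℝ E => (topDualPairing ℝ (StrongDual ℝ E)).flip (toWD (x : StrongDual ℝ E)) Φ)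
        = fun x : WeakDual ℝ E => x w := by
      funext x
      show Φ (x : StrongDual ℝ E) = x w
      rw [← hw]
      rfl
    exact h2 ▸ WeakDual.eval_continuous w
  have hball : (toWD '' closedBall (0:StrongDual ℝ E) R)
      = (fun x : WeakDual ℝ E => toWD (x : StrongDual ℝ E)) ''
        (WeakDual.toStrongDual ⁻¹' closedBall 0 R) := by
    ext x
    simp only [Set.mem_image, Set.mem_preimage, mem_closedBall_zero_iff]
    exact ⟨fun ⟨y, hy, h⟩ => ⟨y, hy, h⟩, fun ⟨y, hy, h⟩ => ⟨y, hy, h⟩⟩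
  rw [hball]
  exact (WeakDual.isCompact_closedBall (E := E) (𝕜 := ℝ) 0 R).image hθcont


lemma contP1 (f : StrongDual ℝ E) :
    Continuous (fun p : (WeakSpace ℝ E × WeakSpace ℝ (StrongDual ℝ E)) × ℝ => f (fromP p).1.1) := by
  have h1 : Continuous (fun p : (WeakSpace ℝ E × WeakSpace ℝ (StrongDual ℝ E)) × ℝ => p.1.1) :=
    continuous_fst.comp continuous_fst
  have h2 : Continuous (fun x : WeakSpace ℝ E => (topDualPairing ℝ E).flip x f) :=
    WeakBilin.eval_continuous ((topDualPairing ℝ E).flip) f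
  exact h2.comp h1

lemma contP2 (v : E) :
    Continuous (fun p : (WeakSpace ℝ E × WeakSpace ℝ (StrongDual ℝ E)) × ℝ => (fromP p).1.2 v) := by
  have h1 : Continuous (fun p : (WeakSpace ℝ E × WeakSpace ℝ (StrongDual ℝ E)) × ℝ => p.1.2) :=
    continuous_snd.comp continuous_fst
  have h2 : Continuous (fun x : WeakSpace ℝ (StrongDual ℝ E) =>
      (topDualPairing ℝ (StrongDual ℝ E)).flip x (inclusionInDoubleDual ℝ E v)) :=
    WeakBilin.eval_continuous ((topDualPairing ℝ (StrongDual ℝ E)).flip) (inclusionInDoubleDual ℝ E v)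
  exact h2.comp h1

-- closedness of the sublevel-type sets
lemma contP3 :
    Continuous (fun p : (WeakSpace ℝ E × WeakSpace ℝ (StrongDual ℝ E)) × ℝ => (fromP p).2) := by
  have h1 : Continuous (fun p : (WeakSpace ℝ E × WeakSpace ℝ (StrongDual ℝ E)) × ℝ => p.2) :=
    continuous_snd
  exact h1

lemma closedSub (G : Set (E × StrongDual ℝ E)) (c : ℝ) :
    IsClosed {p : (WeakSpace ℝ E × WeakSpace ℝ (StrongDual ℝ E)) × ℝ |
      (∀ a ∈ G, aff a (fromP p).1 ≤ (fromP p).2) ∧ (fromP p).2 + QQ (fromP p).1 ≤ c} := by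
  have hA : IsClosed {p : (WeakSpace ℝ E × WeakSpace ℝ (StrongDual ℝ E)) × ℝ |
      ∀ a ∈ G, aff a (fromP p).1 ≤ (fromP p).2} := by
    have heq : {p : (WeakSpace ℝ E × WeakSpace ℝ (StrongDual ℝ E)) × ℝ |
        ∀ a ∈ G, aff a (fromP p).1 ≤ (fromP p).2}
        = ⋂ a ∈ G, {p | aff a (fromP p).1 ≤ (fromP p).2} := by
      ext p; simp
    rw [heq]
    refine isClosed_biInter fun a ha => ?_
    have hcont : Continuous (fun p : (WeakSpace ℝ E × WeakSpace ℝ (StrongDual ℝ E)) × ℝ =>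
        aff a (fromP p).1) := by
      simp only [aff]
      exact ((contP1 a.2).add (contP2 a.1)).sub continuous_const
    exact isClosed_le hcont contP3
  have hB : IsClosed {p : (WeakSpace ℝ E × WeakSpace ℝ (StrongDual ℝ E)) × ℝ |
      (fromP p).2 + QQ (fromP p).1 ≤ c} := by
    have hset : {p : (WeakSpace ℝ E × WeakSpace ℝ (StrongDual ℝ E)) × ℝ |
        (fromP p).2 + QQ (fromP p).1 ≤ c}
        = ⋂ (d : (ℝ × ℝ) × (StrongDual ℝ E × E))
            (_ : 0 ≤ d.1.1 ∧ 0 ≤ d.1.2 ∧ ‖d.2.1‖ ≤ 1 ∧ ‖d.2.2‖ ≤ 1),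
          {p | (fromP p).2 + (d.1.1 * (d.2.1 (fromP p).1.1) - d.1.1^2/2)
              + (d.1.2 * ((fromP p).1.2 d.2.2) - d.1.2^2/2) ≤ c} := by
      ext p
      simp only [Set.mem_iInter, Set.mem_setOf_eq]
      constructor
      · rintro hp ⟨⟨r1, r2⟩, ⟨ℓ, z⟩⟩ ⟨hr1, hr2, hℓ, hz⟩
        simp only at *
        have h1 : ℓ ((fromP p).1.1) ≤ ‖(fromP p).1.1‖ := by
          have := ContinuousLinearMap.le_opNorm ℓ ((fromP p).1.1)
          rw [Real.norm_eq_abs] at this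
          nlinarith [le_abs_self (ℓ ((fromP p).1.1)), norm_nonneg ((fromP p).1.1)]
        have h2 : (fromP p).1.2 z ≤ ‖(fromP p).1.2‖ := by
          have := ContinuousLinearMap.le_opNorm ((fromP p).1.2) z
          rw [Real.norm_eq_abs] at this
          nlinarith [le_abs_self ((fromP p).1.2 z), norm_nonneg ((fromP p).1.2)]
        have k1 : r1 * (ℓ ((fromP p).1.1)) - r1^2/2 ≤ ‖(fromP p).1.1‖^2/2 := by
          nlinarith [sq_nonneg (r1 - ‖(fromP p).1.1‖), mul_le_mul_of_nonneg_left h1 hr1]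
        have k2 : r2 * ((fromP p).1.2 z) - r2^2/2 ≤ ‖(fromP p).1.2‖^2/2 := by
          nlinarith [sq_nonneg (r2 - ‖(fromP p).1.2‖), mul_le_mul_of_nonneg_left h2 hr2]
        simp only [QQ] at hp
        linarith
      · intro hp
        simp only [QQ]
        -- approximate norming
        have hbound : ∀ δ : ℝ, 0 < δ →
            (fromP p).2 + ‖(fromP p).1.1‖^2/2 + ‖(fromP p).1.2‖^2/2 ≤ c + δ := by
          intro δ hδ
          -- exact norming functional for the first component
          obtain ⟨ℓ, hℓ1, hℓ2⟩ : ∃ ℓ : StrongDual ℝ E, ‖ℓ‖ ≤ 1 ∧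
              ℓ ((fromP p).1.1) = ‖(fromP p).1.1‖ := by
            rcases eq_or_ne ((fromP p).1.1 : E) 0 with h0 | h0
            · exact ⟨0, by simp, by rw [h0]; simp⟩
            · obtain ⟨g, hg1, hg2⟩ := exists_dual_vector ℝ _ (norm_ne_zero_iff.mpr h0)
              exact ⟨g, le_of_eq hg1, hg2⟩
          -- approximate norming vector for the second component
          obtain ⟨z, hz1, hz2⟩ : ∃ z : E, ‖z‖ ≤ 1 ∧
              ‖(fromP p).1.2‖ * ‖(fromP p).1.2‖ - δ ≤ ‖(fromP p).1.2‖ * ((fromP p).1.2 z) := by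
            rcases eq_or_lt_of_le (norm_nonneg ((fromP p).1.2)) with h0 | hpos
            · exact ⟨0, by simp, by rw [← h0]; simp; linarith⟩
            · have hr : ‖(fromP p).1.2‖ - δ/‖(fromP p).1.2‖ < ‖(fromP p).1.2‖ := by
                have := div_pos hδ hpos; linarith
              obtain ⟨x, hx1, hx2⟩ :=
                ContinuousLinearMap.exists_lt_apply_of_lt_opNorm ((fromP p).1.2) hr
              rw [Real.norm_eq_abs] at hx2
              rcases le_or_gt 0 ((fromP p).1.2 x) with hsgn | hsgn
              · refine ⟨x, hx1.le, ?_⟩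
                rw [abs_of_nonneg hsgn] at hx2
                have e1 : ‖(fromP p).1.2‖ * (δ/‖(fromP p).1.2‖) = δ := by field_simp
                nlinarith
              · refine ⟨-x, by rw [norm_neg]; exact hx1.le, ?_⟩
                rw [abs_of_neg hsgn] at hx2
                rw [map_neg]
                have e1 : ‖(fromP p).1.2‖ * (δ/‖(fromP p).1.2‖) = δ := by field_simp
                nlinarith
          have := hp ((‖(fromP p).1.1‖, ‖(fromP p).1.2‖), (ℓ, z))
            ⟨norm_nonneg _, norm_nonneg _, hℓ1, hz1⟩
          simp only at this
          rw [hℓ2] at this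
          nlinarith
        by_contra hno
        push_neg at hno
        have := hbound (((fromP p).2 + ‖(fromP p).1.1‖^2/2 + ‖(fromP p).1.2‖^2/2 - c)/2)
          (by linarith)
        linarith
    rw [hset]
    refine isClosed_iInter fun d => isClosed_iInter fun hd => ?_
    refine isClosed_le ?_ continuous_const
    refine ((contP3.add ?_).add ?_)
    · exact ((continuous_const.mul (contP1 d.2.1)).sub continuous_const)
    · exact ((continuous_const.mul (contP2 d.2.2)).sub continuous_const)
  exact hA.inter hB

theorem stepA (hrefl : Function.Surjective (NormedSpace.inclusionInDoubleDual ℝ E))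
    (G : Set (E × StrongDual ℝ E))
    (hmono' : ∀ a ∈ G, ∀ b ∈ G, aff a b ≤ qq b)
    (hmax' : ∀ b : E × StrongDual ℝ E, (∀ a ∈ G, aff a b ≤ qq b) → b ∈ G)
    {a₀ : E × StrongDual ℝ E} (ha₀ : a₀ ∈ G) {ε : ℝ} (hε : 0 < ε) :
    ∃ (b : E × StrongDual ℝ E) (ρ : ℝ), (∀ a ∈ G, aff a b ≤ ρ) ∧ ρ + QQ b < ε := by
  by_contra hcon
  push_neg at hcon
  -- the open convex "strict epigraph" set
  set W : Set ((E × StrongDual ℝ E) × ℝ) :=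
    {p | ∃ b ρ, (∀ a ∈ G, aff a b ≤ ρ) ∧ ρ + QQ (b - p.1) < p.2} with hW
  have hWopen : IsOpen W := by
    rw [isOpen_iff_forall_mem_open]
    rintro p ⟨b, ρ, hb, hlt⟩
    refine ⟨{p' | ρ + QQ (b - p'.1) < p'.2}, fun p' hp' => ⟨b, ρ, hb, hp'⟩, ?_, hlt⟩
    have hc : Continuous fun p' : (E × StrongDual ℝ E) × ℝ => ρ + QQ (b - p'.1) := by
      simp only [QQ]
      fun_prop
    exact isOpen_lt hc continuous_snd
  have hWconv : Convex ℝ W := by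
    rintro p ⟨b₁, ρ₁, hb₁, hlt₁⟩ p' ⟨b₂, ρ₂, hb₂, hlt₂⟩ s t hs ht hst
    refine ⟨s • b₁ + t • b₂, s * ρ₁ + t * ρ₂, fun a ha => ?_, ?_⟩
    · rw [aff_combo a hst]
      have := hb₁ a ha; have := hb₂ a ha
      nlinarith [mul_le_mul_of_nonneg_left (hb₁ a ha) hs, mul_le_mul_of_nonneg_left (hb₂ a ha) ht]
    · have hdiff : s • b₁ + t • b₂ - (s • p + t • p').1 = s • (b₁ - p.1) + t • (b₂ - p'.1) := by
        simp only [Prod.fst_add, Prod.smul_fst]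
        module
      rw [hdiff]
      have hQ := QQ_combo hs ht hst (b₁ - p.1) (b₂ - p'.1)
      have hsnd : (s • p + t • p').2 = s * p.2 + t * p'.2 := rfl
      rw [hsnd]
      rcases hs.eq_or_lt with rfl | hs'
      · simp only [zero_add, zero_mul] at hst ⊢
        subst hst
        simp only [one_smul, one_mul] at hQ ⊢
        nlinarith
      · nlinarith [mul_le_mul_of_nonneg_left hlt₂.le ht, mul_lt_mul_of_pos_left hlt₁ hs']
  have hx₀ : (((0:E), (0:StrongDual ℝ E)), ε) ∉ W := by
    rintro ⟨b, ρ, hb, hlt⟩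
    rw [show (((0:E),(0:StrongDual ℝ E)) : E × StrongDual ℝ E) = 0 from rfl, sub_zero] at hlt
    exact absurd hlt (not_lt.mpr (hcon b ρ hb))
  obtain ⟨Λ, hΛ⟩ := geometric_hahn_banach_open_point hWconv hWopen hx₀
  set Λ₀ : ℝ := Λ (((0:E), (0:StrongDual ℝ E)), (1:ℝ)) with hΛ₀
  have hvert : ∀ r : ℝ, Λ (((0:E), (0:StrongDual ℝ E)), r) = r * Λ₀ := by
    intro r
    have : (((0:E), (0:StrongDual ℝ E)), r) = r • (((0:E), (0:StrongDual ℝ E)), (1:ℝ)) := by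
      simp [Prod.smul_def, smul_eq_mul]
    rw [this, map_smul, smul_eq_mul]
  have hmemv : ∀ r : ℝ, qq a₀ + QQ a₀ < r → (((0:E), (0:StrongDual ℝ E)), r) ∈ W := by
    intro r hr
    exact ⟨a₀, qq a₀, fun a ha => hmono' a ha a₀ ha₀, by simpa [show ((0:E), (0:StrongDual ℝ E)) = 0 from rfl] using hr⟩
  have hΛneg : Λ₀ < 0 := by
    set r := max (qq a₀ + QQ a₀ + 1) (ε + 1) with hrdef
    have h1 : qq a₀ + QQ a₀ < r := lt_of_lt_of_le (by linarith) (le_max_left _ _)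
    have h2 := hΛ _ (hmemv r h1)
    rw [hvert, hvert] at h2
    have h3 : ε + 1 ≤ r := le_max_right _ _
    nlinarith
  obtain ⟨s, hspos, hΛ₀s⟩ : ∃ s : ℝ, 0 < s ∧ Λ₀ = -s := ⟨-Λ₀, by linarith, by ring⟩
  set L : (E × StrongDual ℝ E) →L[ℝ] ℝ := Λ.comp (ContinuousLinearMap.inl ℝ (E × StrongDual ℝ E) ℝ) with hL
  have hsplit : ∀ (y : E × StrongDual ℝ E) (r : ℝ), Λ (y, r) = L y + r * Λ₀ := by
    intro y r
    have : ((y, r) : (E × StrongDual ℝ E) × ℝ) = (y, 0) + r • (((0:E), (0:StrongDual ℝ E)), (1:ℝ)) := by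
      simp [Prod.ext_iff, smul_eq_mul]
    rw [this, map_add, map_smul, smul_eq_mul]
    rfl
  have key : ∀ (b : E × StrongDual ℝ E) (ρ : ℝ), (∀ a ∈ G, aff a b ≤ ρ) →
      ∀ y : E × StrongDual ℝ E, s * ε + L y ≤ s * (ρ + QQ (b - y)) := by
    intro b ρ hb y
    obtain ⟨R₀, hR₀⟩ : ∃ R₀ : ℝ, R₀ = ρ + QQ (b - y) := ⟨_, rfl⟩
    rw [← hR₀]
    have hr : ∀ r : ℝ, R₀ < r → L y + r * Λ₀ < ε * Λ₀ := by
      intro r hltr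
      rw [hR₀] at hltr
      have := hΛ (y, r) ⟨b, ρ, hb, hltr⟩
      rwa [hsplit, hvert] at this
    by_contra hcc
    push_neg at hcc
    obtain ⟨δ, hδpos, hsd⟩ : ∃ δ : ℝ, 0 < δ ∧ s * δ = (s * ε + L y - s * R₀) / 2 :=
      ⟨(s * ε + L y - s * R₀) / (2 * s), div_pos (by linarith) (by linarith), by
        field_simp⟩
    have h6 := hr (R₀ + δ) (by linarith)
    rw [hΛ₀s] at h6
    have h7 : L y + (R₀ + δ) * (-s) = L y - s * R₀ - s * δ := by ring
    rw [h7] at h6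
    have h8 : ε * (-s) = -(s * ε) := by ring
    rw [h8] at h6
    linarith
  set w1 : StrongDual ℝ E := (1/s) • (L.comp (ContinuousLinearMap.inl ℝ E (StrongDual ℝ E))) with hw1
  set W2 : StrongDual ℝ (StrongDual ℝ E) := (1/s) • (L.comp (ContinuousLinearMap.inr ℝ E (StrongDual ℝ E))) with hW2
  obtain ⟨w, hw⟩ := hrefl W2
  have hLsplit : ∀ y : E × StrongDual ℝ E, L y = s * (w1 y.1 + y.2 w) := by
    intro y
    have hy : y = (y.1, 0) + (0, y.2) := by simp
    have h1 : L (y.1, (0:StrongDual ℝ E)) = s * w1 y.1 := by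
      rw [hw1]
      simp only [ContinuousLinearMap.coe_smul', Pi.smul_apply, ContinuousLinearMap.coe_comp',
        Function.comp_apply, ContinuousLinearMap.inl_apply, smul_eq_mul]
      field_simp
    have h2 : L ((0:E), y.2) = s * y.2 w := by
      have hW2y : W2 y.2 = y.2 w := by rw [← hw]; rfl
      rw [hW2] at hW2y
      simp only [ContinuousLinearMap.coe_smul', Pi.smul_apply, ContinuousLinearMap.coe_comp',
        Function.comp_apply, ContinuousLinearMap.inr_apply, smul_eq_mul] at hW2y
      have : L ((0:E), y.2) = s * ((1/s) * L ((0:E), y.2)) := by field_simp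
      rw [this, hW2y]
    calc L y = L ((y.1, 0) + ((0:E), y.2)) := by rw [← hy]
      _ = L (y.1, 0) + L ((0:E), y.2) := map_add _ _ _
      _ = s * (w1 y.1 + y.2 w) := by rw [h1, h2]; ring
  have key2 : ∀ a ∈ G, ∀ z : E × StrongDual ℝ E,
      ε + (w1 a.1 + a.2 w) - (w1 z.1 + z.2 w) ≤ qq a + QQ z := by
    intro a ha z
    have hk := key a (qq a) (fun a' ha' => hmono' a' ha' a ha) (a - z)
    have hsub : a - (a - z) = z := by abel
    rw [hsub] at hk
    rw [hLsplit (a - z)] at hk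
    have hfst : (a - z).1 = a.1 - z.1 := rfl
    have hsnd : (a - z).2 = a.2 - z.2 := rfl
    rw [hfst, hsnd, map_sub, ContinuousLinearMap.sub_apply] at hk
    have := (mul_le_mul_iff_right₀ hspos).mp (by linarith [hk] : s * (ε + ((w1 a.1 + a.2 w) - (w1 z.1 + z.2 w))) ≤ s * (qq a + QQ z))
    linarith
  -- optimize over z
  have main : ∀ a ∈ G, ε + (w1 a.1 + a.2 w) + ‖w1‖^2/2 + ‖w‖^2/2 ≤ qq a := by
    intro a ha
    have hdelta : ∀ δ : ℝ, 0 < δ → ε + (w1 a.1 + a.2 w) + ‖w1‖^2/2 + ‖w‖^2/2 ≤ qq a + δ := by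
      intro δ hδ
      obtain ⟨z1, hz1⟩ := dual_opt (-w1) hδ
      rw [norm_neg] at hz1
      have hz1' : w1 z1 + ‖z1‖^2/2 ≤ -(‖w1‖^2/2) + δ := by
        have : (-w1) z1 = -(w1 z1) := rfl
        rw [this] at hz1; linarith
      obtain ⟨z2, hz2⟩ := vec_opt w
      have hk := key2 a ha (z1, z2)
      simp only [QQ] at hk
      linarith
    by_contra hno
    push_neg at hno
    have := hdelta ((ε + (w1 a.1 + a.2 w) + ‖w1‖^2/2 + ‖w‖^2/2 - qq a)/2) (by linarith)
    linarith
  -- transpose / maximality step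
  have htr : ∃ a ∈ G, w1 w ≤ w1 a.1 + a.2 w - qq a := by
    by_cases hcw : ((w, w1) : E × StrongDual ℝ E) ∈ G
    · exact ⟨(w, w1), hcw, by simp [qq]⟩
    · have h1 := mt (hmax' (w, w1)) hcw
      push_neg at h1
      obtain ⟨a, ha, hlt⟩ := h1
      refine ⟨a, ha, ?_⟩
      simp only [aff, qq] at hlt ⊢
      linarith
  obtain ⟨a, ha, hta⟩ := htr
  have hm := main a ha
  have hub : -(‖w1‖ * ‖w‖) ≤ w1 w := by
    have := ContinuousLinearMap.le_opNorm w1 w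
    rw [Real.norm_eq_abs] at this
    cases' abs_le.mp this with h1 h2
    linarith
  nlinarith [sq_nonneg (‖w1‖ - ‖w‖)]


theorem core (hrefl : Function.Surjective (NormedSpace.inclusionInDoubleDual ℝ E))
    (G : Set (E × StrongDual ℝ E))
    (hmono' : ∀ a ∈ G, ∀ b ∈ G, aff a b ≤ qq b)
    (hmax' : ∀ b : E × StrongDual ℝ E, (∀ a ∈ G, aff a b ≤ qq b) → b ∈ G)
    {a₀ : E × StrongDual ℝ E} (ha₀ : a₀ ∈ G) :
    ∃ v ∈ G, ‖v.1‖^2/2 + ‖v.2‖^2/2 + v.2 v.1 ≤ 0 := by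
  classical
  set C1 : ℝ := ‖a₀.2‖ with hC1
  set C2 : ℝ := ‖a₀.1‖ with hC2
  set C3 : ℝ := |qq a₀| with hC3
  set R : ℝ := 2 + 2*C1 + 2*C2 + 2*C3 + C1^2 + C2^2 with hR
  set lo : ℝ := -(C1*R + C2*R + C3) with hlo
  have hC1n : 0 ≤ C1 := norm_nonneg _
  have hC2n : 0 ≤ C2 := norm_nonneg _
  have hC3n : 0 ≤ C3 := abs_nonneg _
  set KP : ℕ → Set ((WeakSpace ℝ E × WeakSpace ℝ (StrongDual ℝ E)) × ℝ) := fun n =>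
    {p | (∀ a ∈ G, aff a (fromP p).1 ≤ (fromP p).2)
      ∧ (fromP p).2 + QQ (fromP p).1 ≤ 1/((n:ℝ)+1)} with hKP
  have hKcl : ∀ n, IsClosed (KP n) := fun n => closedSub G _
  have hne : ∀ n, (KP n).Nonempty := by
    intro n
    have hpos : (0:ℝ) < 1/((n:ℝ)+1) := by positivity
    obtain ⟨b, ρ, hb, hlt⟩ := stepA hrefl G hmono' hmax' ha₀ hpos
    exact ⟨((toWE b.1, toWD b.2), ρ), hb, hlt.le⟩
  have hbound : ∀ n, ∀ p ∈ KP n, ‖(fromP p).1.1‖ ≤ R ∧ ‖(fromP p).1.2‖ ≤ R ∧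
      lo ≤ (fromP p).2 ∧ (fromP p).2 ≤ 1 := by
    intro n p hp
    obtain ⟨haf, hq⟩ := hp
    set b := (fromP p).1 with hb
    set ρ := (fromP p).2 with hρ
    have h1 : (1:ℝ)/((n:ℝ)+1) ≤ 1 := by
      rw [div_le_one (by positivity)]
      simp
    have hq1 : ρ + QQ b ≤ 1 := le_trans hq h1
    have haff0 : aff a₀ b ≤ ρ := haf a₀ ha₀
    have hlow : -(C1*‖b.1‖) - ‖b.2‖*C2 - C3 ≤ aff a₀ b := by
      simp only [aff]
      have e1 : -(C1*‖b.1‖) ≤ a₀.2 b.1 := by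
        have := ContinuousLinearMap.le_opNorm a₀.2 b.1
        rw [Real.norm_eq_abs] at this
        cases' abs_le.mp this with hh1 hh2
        linarith
      have e2 : -(‖b.2‖*C2) ≤ b.2 a₀.1 := by
        have := ContinuousLinearMap.le_opNorm b.2 a₀.1
        rw [Real.norm_eq_abs] at this
        cases' abs_le.mp this with hh1 hh2
        linarith
      have e3 : a₀.2 a₀.1 ≤ C3 := by rw [hC3]; exact le_abs_self _
      linarith
    have hρlow : -(C1*‖b.1‖) - ‖b.2‖*C2 - C3 ≤ ρ := le_trans hlow haff0
    have hQb : QQ b ≤ 1 + C1*‖b.1‖ + ‖b.2‖*C2 + C3 := by linarith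
    simp only [QQ] at hQb
    have hn1 : 0 ≤ ‖b.1‖ := norm_nonneg _
    have hn2 : 0 ≤ ‖b.2‖ := norm_nonneg _
    have hb1R : ‖b.1‖ ≤ R := by nlinarith [sq_nonneg (‖b.1‖ - C1), sq_nonneg (‖b.2‖ - C2), sq_nonneg (‖b.1‖ - R)]
    have hb2R : ‖b.2‖ ≤ R := by nlinarith [sq_nonneg (‖b.1‖ - C1), sq_nonneg (‖b.2‖ - C2), sq_nonneg (‖b.2‖ - R)]
    have hρ1 : ρ ≤ 1 := by
      have : 0 ≤ QQ b := by simp only [QQ]; positivity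
      linarith
    have hρlo : lo ≤ ρ := by
      rw [hlo]
      nlinarith [mul_le_mul_of_nonneg_left hb1R hC1n, mul_le_mul_of_nonneg_right hb2R hC2n]
    exact ⟨hb1R, hb2R, hρlo, hρ1⟩
  have hsub : ∀ n, KP n ⊆ ((toWE '' closedBall (0:E) R) ×ˢ (toWD '' closedBall (0:StrongDual ℝ E) R)) ×ˢ
      Set.Icc lo 1 := by
    intro n p hp
    obtain ⟨h1, h2, h3, h4⟩ := hbound n p hp
    refine ⟨⟨⟨(fromP p).1.1, ?_, rfl⟩, ⟨(fromP p).1.2, ?_, rfl⟩⟩, h3, h4⟩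
    · rwa [mem_closedBall_zero_iff]
    · rwa [mem_closedBall_zero_iff]
  have cptS : IsCompact (((toWE '' closedBall (0:E) R) ×ˢ (toWD '' closedBall (0:StrongDual ℝ E) R)) ×ˢ
      Set.Icc lo 1) := ((cptE' R hrefl).prod (cptD' R hrefl)).prod isCompact_Icc
  have hanti : ∀ n, KP (n+1) ⊆ KP n := by
    intro n p hp
    refine ⟨hp.1, le_trans hp.2 ?_⟩
    apply one_div_le_one_div_of_le (by positivity)
    push_cast
    linarith
  obtain ⟨v, hv⟩ := IsCompact.nonempty_iInter_of_sequence_nonempty_isCompact_isClosed KP hanti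
    hne (cptS.of_isClosed_subset (hKcl 0) (hsub 0)) hKcl
  rw [Set.mem_iInter] at hv
  set b := (fromP v).1 with hbv
  set ρ := (fromP v).2 with hρv
  have haffv : ∀ a ∈ G, aff a b ≤ ρ := (hv 0).1
  have hval : ρ + QQ b ≤ 0 := by
    by_contra hpos
    push_neg at hpos
    obtain ⟨n, hn⟩ := exists_nat_one_div_lt hpos
    have := (hv n).2
    rw [← hbv, ← hρv] at this
    linarith
  have hqQ : -QQ b ≤ qq b := by
    simp only [qq, QQ]
    have := ContinuousLinearMap.le_opNorm b.2 b.1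
    rw [Real.norm_eq_abs] at this
    cases' abs_le.mp this with hh1 hh2
    nlinarith [sq_nonneg (‖b.1‖ - ‖b.2‖)]
  have hbG : b ∈ G := by
    apply hmax'
    intro a ha
    have := haffv a ha
    linarith
  refine ⟨b, hbG, ?_⟩
  have hself : aff b b = qq b := by simp only [aff, qq]; ring
  have := haffv b hbG
  rw [hself] at this
  simp only [qq, QQ] at *
  linarith


end QuasidenseAux


theorem stmt17 {E : Type*} [NormedAddCommGroup E] [NormedSpace ℝ E] [CompleteSpace E]
    [Nontrivial E]
    (hrefl : Function.Surjective (NormedSpace.inclusionInDoubleDual ℝ E))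
    (G : Set (E × StrongDual ℝ E))
    (hmono : ∀ a ∈ G, ∀ b ∈ G, 0 ≤ (a.2 - b.2) (a.1 - b.1))
    (hmax : ∀ c : E × StrongDual ℝ E,
      (∀ a ∈ G, 0 ≤ (a.2 - c.2) (a.1 - c.1)) → c ∈ G) :
    ∀ c : E × StrongDual ℝ E,
      (⨅ a ∈ G, ((‖a.1 - c.1‖ ^ 2 / 2 + ‖a.2 - c.2‖ ^ 2 / 2
        + (a.2 - c.2) (a.1 - c.1) : ℝ) : EReal)) ≤ 0 := by
  intro c
  -- translate the graph
  set G' : Set (E × StrongDual ℝ E) := {b | (b.1 + c.1, b.2 + c.2) ∈ G} with hG'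
  have hkey : ∀ a b : E × StrongDual ℝ E, qq b - aff a b = (a.2 - b.2) (a.1 - b.1) := by
    intro a b
    simp only [qq, aff, ContinuousLinearMap.sub_apply, map_sub]
    ring
  have hmono' : ∀ a ∈ G', ∀ b ∈ G', aff a b ≤ qq b := by
    intro a ha b hb
    have := hmono _ ha _ hb
    simp only [add_sub_add_right_eq_sub] at this
    have h2 := hkey a b
    simp only [ContinuousLinearMap.sub_apply, map_sub] at this h2 ⊢
    linarith
  have hmax' : ∀ b : E × StrongDual ℝ E, (∀ a ∈ G', aff a b ≤ qq b) → b ∈ G' := by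
    intro b hb
    show (b.1 + c.1, b.2 + c.2) ∈ G
    apply hmax
    intro a ha
    have haG' : (a.1 - c.1, a.2 - c.2) ∈ G' := by
      show (a.1 - c.1 + c.1, a.2 - c.2 + c.2) ∈ G
      simpa using ha
    have := hb _ haG'
    have h2 := hkey (a.1 - c.1, a.2 - c.2) b
    simp only [ContinuousLinearMap.sub_apply, ContinuousLinearMap.add_apply, map_sub, map_add]
      at this h2 ⊢
    linarith
  -- G' is nonempty
  have hne : ∃ a₀, a₀ ∈ G' := by
    by_contra hempty
    push_neg at hempty
    have : ((0:E) - c.1, (0:StrongDual ℝ E) - c.2) ∈ G' := by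
      apply hmax'
      intro a ha
      exact absurd ha (hempty a)
    exact absurd this (hempty _)
  obtain ⟨a₀, ha₀⟩ := hne
  obtain ⟨v, hvG', hval⟩ := core hrefl G' hmono' hmax' ha₀
  have hvG : (v.1 + c.1, v.2 + c.2) ∈ G := hvG'
  have hEval : (‖(v.1 + c.1) - c.1‖ ^ 2 / 2 + ‖(v.2 + c.2) - c.2‖ ^ 2 / 2
      + ((v.2 + c.2) - c.2) ((v.1 + c.1) - c.1) : ℝ) ≤ 0 := by
    simpa using hval
  calc (⨅ a ∈ G, ((‖a.1 - c.1‖ ^ 2 / 2 + ‖a.2 - c.2‖ ^ 2 / 2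
        + (a.2 - c.2) (a.1 - c.1) : ℝ) : EReal))
      ≤ ((‖(v.1 + c.1) - c.1‖ ^ 2 / 2 + ‖(v.2 + c.2) - c.2‖ ^ 2 / 2
        + ((v.2 + c.2) - c.2) ((v.1 + c.1) - c.1) : ℝ) : EReal) := by
        exact iInf₂_le (v.1 + c.1, v.2 + c.2) hvG
    _ ≤ ((0:ℝ) : EReal) := by exact_mod_cast hEval
    _ = (0 : EReal) := by norm_num
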